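/- There exist probability measures μ₁ᴹ, μ₂ᴹ, μ₁ᶠ, μ₂ᶠ on ℝ, each with finite second moment and positive variance, such that: Var(μ₁ᴹ)/Var(μ₁ᶠ) > 1, Var(μ₂ᴹ)/Var(μ₂ᶠ) < 1, and yet Var((1/2)•μ₁ᴹ + (1/2)•μ₂ᴹ) / Var((1/2)•μ₁ᶠ + (1/2)•μ₂ᶠ) > 1. In other words, the overall (pooled) population can exhibit greater male variability (pooled variance ratio greater than 1) even though not every country individually has a variance ratio greater than 1. -/

import Mathlib

open MeasureTheory ProbabilityTheory
open scoped ENNReal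

section Aux

lemma memℒp_dirac_aux {f : ℝ → ℝ} (hf : Measurable f) (a : ℝ) :
    MemLp f 2 (Measure.dirac a) := by
  refine ⟨hf.stronglyMeasurable.aestronglyMeasurable, ?_⟩
  rw [eLpNorm_eq_lintegral_rpow_enorm_toReal (by norm_num) (by norm_num)]
  rw [lintegral_dirac' _ (by measurability)]
  refine ENNReal.rpow_lt_top_of_nonneg (by norm_num) ?_
  exact ENNReal.rpow_ne_top_of_nonneg (by norm_num) ENNReal.coe_ne_top

lemma memℒp_add_measure_aux {f : ℝ → ℝ} {μ ν : Measure ℝ}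
    (h1 : MemLp f 2 μ) (h2 : MemLp f 2 ν) : MemLp f 2 (μ + ν) := by
  refine ⟨h1.aestronglyMeasurable.add_measure h2.aestronglyMeasurable, ?_⟩
  rw [eLpNorm_eq_lintegral_rpow_enorm_toReal (by norm_num) (by norm_num),
    lintegral_add_measure]
  refine ENNReal.rpow_lt_top_of_nonneg (by norm_num) (ENNReal.add_ne_top.2 ⟨?_, ?_⟩)
  · have := h1.2
    rw [eLpNorm_eq_lintegral_rpow_enorm_toReal (by norm_num) (by norm_num)] at this
    exact (ENNReal.rpow_lt_top_iff_of_pos (by norm_num)).mp this |>.ne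
  · have := h2.2
    rw [eLpNorm_eq_lintegral_rpow_enorm_toReal (by norm_num) (by norm_num)] at this
    exact (ENNReal.rpow_lt_top_iff_of_pos (by norm_num)).mp this |>.ne

/-- The two-point measure `(δ_a + δ_b)/2`. -/
noncomputable def twoPt (a b : ℝ) : Measure ℝ :=
  (1/2 : ℝ≥0∞) • Measure.dirac a + (1/2 : ℝ≥0∞) • Measure.dirac b

instance twoPt_prob (a b : ℝ) : IsProbabilityMeasure (twoPt a b) := by
  constructor
  simp [twoPt]
  rw [ENNReal.inv_two_add_inv_two]

lemma memℒp_twoPt {f : ℝ → ℝ} (hf : Measurable f) (a b : ℝ) :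
    MemLp f 2 (twoPt a b) :=
  memℒp_add_measure_aux
    ((memℒp_dirac_aux hf a).smul_measure (by norm_num))
    ((memℒp_dirac_aux hf b).smul_measure (by norm_num))

lemma integral_twoPt {f : ℝ → ℝ} (hf : Measurable f) (a b : ℝ) :
    ∫ x, f x ∂(twoPt a b) = (f a + f b) / 2 := by
  rw [twoPt, integral_add_measure
      (((memℒp_dirac_aux hf a).integrable one_le_two).smul_measure (by norm_num))
      (((memℒp_dirac_aux hf b).integrable one_le_two).smul_measure (by norm_num)),
    integral_smul_measure, integral_smul_measure, integral_dirac, integral_dirac]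
  have : ((1/2 : ℝ≥0∞)).toReal = (1/2 : ℝ) := by simp
  rw [this]
  simp [smul_eq_mul]
  ring

/-- The pooled measure of two two-point measures. -/
noncomputable def pool (μ ν : Measure ℝ) : Measure ℝ :=
  (1/2 : ℝ≥0∞) • μ + (1/2 : ℝ≥0∞) • ν

lemma memℒp_pool {f : ℝ → ℝ} {μ ν : Measure ℝ} (h1 : MemLp f 2 μ) (h2 : MemLp f 2 ν) :
    MemLp f 2 (pool μ ν) :=
  memℒp_add_measure_aux (h1.smul_measure (by norm_num)) (h2.smul_measure (by norm_num))

instance pool_prob (μ ν : Measure ℝ) [IsProbabilityMeasure μ] [IsProbabilityMeasure ν] :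
    IsProbabilityMeasure (pool μ ν) := by
  constructor
  simp [pool]
  rw [ENNReal.inv_two_add_inv_two]

lemma integral_pool {f : ℝ → ℝ} {μ ν : Measure ℝ} [IsFiniteMeasure μ] [IsFiniteMeasure ν]
    (h1 : MemLp f 2 μ) (h2 : MemLp f 2 ν) :
    ∫ x, f x ∂(pool μ ν) = ((∫ x, f x ∂μ) + ∫ x, f x ∂ν) / 2 := by
  rw [pool, integral_add_measure
      ((h1.integrable one_le_two).smul_measure (by norm_num))
      ((h2.integrable one_le_two).smul_measure (by norm_num)),
    integral_smul_measure, integral_smul_measure]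
  have : ((1/2 : ℝ≥0∞)).toReal = (1/2 : ℝ) := by simp
  rw [this]
  simp [smul_eq_mul]
  ring

lemma variance_twoPt (a b : ℝ) :
    variance id (twoPt a b) = ((b - a) / 2) ^ 2 := by
  rw [variance_eq_sub (memℒp_twoPt measurable_id a b)]
  have h1 : ∫ x, id x ∂(twoPt a b) = (a + b) / 2 := by
    simpa using integral_twoPt measurable_id a b
  have h2 : ∫ x, (id ^ 2) x ∂(twoPt a b) = (a ^ 2 + b ^ 2) / 2 := by
    have := integral_twoPt (f := fun x => x ^ 2) (by measurability) a b
    simpa [Pi.pow_apply] using this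
  rw [h1, h2]
  ring

end Aux

/-- Example 1 of the paper: there exist probability measures on `ℝ` (male and female score
distributions in two countries), each with finite second moment and positive variance, such
that country 1 has variance ratio `> 1`, country 2 has variance ratio `< 1`, yet the pooled
(equal-weight mixture) population has variance ratio `> 1`. This refutes the premise (P). -/
theorem exists_pooled_GMV_without_countrywise_GMV :
    ∃ (μ₁M μ₂M μ₁F μ₂F : Measure ℝ),
      IsProbabilityMeasure μ₁M ∧ IsProbabilityMeasure μ₂M ∧
      IsProbabilityMeasure μ₁F ∧ IsProbabilityMeasure μ₂F ∧
      MemLp id 2 μ₁M ∧ MemLp id 2 μ₂M ∧ MemLp id 2 μ₁F ∧ MemLp id 2 μ₂F ∧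
      0 < variance id μ₁M ∧ 0 < variance id μ₂M ∧
      0 < variance id μ₁F ∧ 0 < variance id μ₂F ∧
      variance id μ₁M / variance id μ₁F > 1 ∧
      variance id μ₂M / variance id μ₂F < 1 ∧
      variance id ((1/2 : ℝ≥0∞) • μ₁M + (1/2 : ℝ≥0∞) • μ₂M) /
          variance id ((1/2 : ℝ≥0∞) • μ₁F + (1/2 : ℝ≥0∞) • μ₂F) > 1 := by
  refine ⟨twoPt (-4) 0, twoPt (3/2) (5/2), twoPt 0 2, twoPt 0 2,
    inferInstance, inferInstance, inferInstance, inferInstance,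
    memℒp_twoPt measurable_id _ _, memℒp_twoPt measurable_id _ _,
    memℒp_twoPt measurable_id _ _, memℒp_twoPt measurable_id _ _,
    ?_, ?_, ?_, ?_, ?_, ?_, ?_⟩
  · rw [variance_twoPt]; norm_num
  · rw [variance_twoPt]; norm_num
  · rw [variance_twoPt]; norm_num
  · rw [variance_twoPt]; norm_num
  · rw [variance_twoPt, variance_twoPt]; norm_num
  · rw [variance_twoPt, variance_twoPt]; norm_num
  · have hM : variance id ((1/2 : ℝ≥0∞) • twoPt (-4) 0 + (1/2 : ℝ≥0∞) • twoPt (3/2) (5/2))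
        = 49 / 8 := by
      have hm := memℒp_twoPt measurable_id (-4 : ℝ) 0
      have hm' := memℒp_twoPt measurable_id (3/2 : ℝ) (5/2)
      have hpool : ((1/2 : ℝ≥0∞) • twoPt (-4) 0 + (1/2 : ℝ≥0∞) • twoPt (3/2) (5/2))
          = pool (twoPt (-4) 0) (twoPt (3/2) (5/2)) := rfl
      rw [hpool, variance_eq_sub (memℒp_pool hm hm')]
      have h1 : ∫ x, id x ∂(pool (twoPt (-4) 0) (twoPt (3/2) (5/2))) = 0 := by
        rw [integral_pool hm hm']
        rw [show (∫ x, id x ∂(twoPt (-4) 0)) = ((-4 : ℝ) + 0)/2 from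
          integral_twoPt measurable_id _ _,
          show (∫ x, id x ∂(twoPt (3/2) (5/2))) = ((3/2 : ℝ) + 5/2)/2 from
          integral_twoPt measurable_id _ _]
        norm_num
      have hsq : Measurable fun x : ℝ => x ^ 2 := by measurability
      have hm2 := memℒp_twoPt hsq (-4 : ℝ) 0
      have hm2' := memℒp_twoPt hsq (3/2 : ℝ) (5/2)
      have h2 : ∫ x, (id ^ 2) x ∂(pool (twoPt (-4) 0) (twoPt (3/2) (5/2))) = 49/8 := by
        have : ∫ x, (fun x : ℝ => x ^ 2) x ∂(pool (twoPt (-4) 0) (twoPt (3/2) (5/2)))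
            = ((∫ x, (fun x : ℝ => x ^ 2) x ∂(twoPt (-4) 0))
              + ∫ x, (fun x : ℝ => x ^ 2) x ∂(twoPt (3/2) (5/2))) / 2 :=
          integral_pool hm2 hm2'
        rw [show (∫ x, (fun x : ℝ => x ^ 2) x ∂(twoPt (-4) 0)) = (((-4:ℝ))^2 + 0^2)/2 from
          integral_twoPt hsq _ _,
          show (∫ x, (fun x : ℝ => x ^ 2) x ∂(twoPt (3/2) (5/2)))
            = (((3/2:ℝ))^2 + (5/2)^2)/2 from integral_twoPt hsq _ _] at this
        norm_num at this
        simpa [Pi.pow_apply] using this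
      rw [h1, h2]
      norm_num
    have hF : variance id ((1/2 : ℝ≥0∞) • twoPt 0 2 + (1/2 : ℝ≥0∞) • twoPt 0 2)
        = 1 := by
      have hm := memℒp_twoPt measurable_id (0 : ℝ) 2
      have hpool : ((1/2 : ℝ≥0∞) • twoPt 0 2 + (1/2 : ℝ≥0∞) • twoPt 0 2)
          = pool (twoPt 0 2) (twoPt 0 2) := rfl
      rw [hpool, variance_eq_sub (memℒp_pool hm hm)]
      have h1 : ∫ x, id x ∂(pool (twoPt 0 2) (twoPt 0 2)) = 1 := by
        rw [integral_pool hm hm,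
          show (∫ x, id x ∂(twoPt 0 2)) = ((0:ℝ) + 2)/2 from integral_twoPt measurable_id _ _]
        norm_num
      have hsq : Measurable fun x : ℝ => x ^ 2 := by measurability
      have hm2 := memℒp_twoPt hsq (0 : ℝ) 2
      have h2 : ∫ x, (id ^ 2) x ∂(pool (twoPt 0 2) (twoPt 0 2)) = 2 := by
        have : ∫ x, (fun x : ℝ => x ^ 2) x ∂(pool (twoPt 0 2) (twoPt 0 2))
            = ((∫ x, (fun x : ℝ => x ^ 2) x ∂(twoPt 0 2))
              + ∫ x, (fun x : ℝ => x ^ 2) x ∂(twoPt 0 2)) / 2 := integral_pool hm2 hm2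
        rw [show (∫ x, (fun x : ℝ => x ^ 2) x ∂(twoPt 0 2)) = ((0:ℝ)^2 + 2^2)/2 from
          integral_twoPt hsq _ _] at this
        norm_num at this
        simpa [Pi.pow_apply] using this
      rw [h1, h2]
      norm_num
    rw [hM, hF]
    norm_num
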